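/- Let b ≥ 4 and let A > 0 satisfy (b+1)·bA ≥ 1. Set τ = (bA)^{1/b}·(1 + ((b+2)/(12(b+4)))·(bA)^{−2/b})^{1/b}. Then (b+4)·τ^4·(bA) − 4·τ^{b+4} + (1/3)·τ^{b+2} ≥ b·(bA)^{1+4/b} + (1/3)·(bA)^{1+2/b} + ((b+2)²/(72b(b+4)))·(bA) + ((13b³+56b²−52b−32)/(12b³))·((b+2)/(12(b+4)))³·(bA)^{1−2/b}. -/

import Mathlib

open Real Set

lemma aux_mono (f f' : ℝ → ℝ) (hf : ∀ u : ℝ, 0 ≤ u → HasDerivAt f (f' u) u)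
    (hf' : ∀ u : ℝ, 0 ≤ u → 0 ≤ f' u) {u : ℝ} (hu : 0 ≤ u) : f 0 ≤ f u := by
  have hmono : MonotoneOn f (Set.Ici 0) := by
    apply monotoneOn_of_deriv_nonneg (convex_Ici 0)
    · exact fun v hv => (hf v hv).continuousAt.continuousWithinAt
    · rw [interior_Ici]
      exact fun v hv => (hf v (le_of_lt hv)).differentiableAt.differentiableWithinAt
    · rw [interior_Ici]
      intro v hv
      rw [(hf v (le_of_lt hv)).deriv]
      exact hf' v (le_of_lt hv)
  exact hmono Set.self_mem_Ici hu hu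

lemma hasDerivAt_base (p : ℝ) {u : ℝ} (hu : 0 ≤ u) :
    HasDerivAt (fun v : ℝ => (1 + v) ^ p) (p * (1 + u) ^ (p - 1)) u := by
  have h1 : (1 : ℝ) + u ≠ 0 := by linarith
  have h := Real.hasDerivAt_rpow_const (x := 1 + u) (p := p) (Or.inl h1)
  have hadd : HasDerivAt (fun v : ℝ => 1 + v) 1 u := (hasDerivAt_id u).const_add 1
  have hc := h.comp u hadd
  rw [mul_one] at hc
  exact hc

lemma bern0 {p u : ℝ} (hp : p ≤ 0) (hu : 0 ≤ u) : (1 + u) ^ p ≤ 1 :=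
  Real.rpow_le_one_of_one_le_of_nonpos (by linarith) hp

lemma bern1 {p : ℝ} (hp : p ≤ 0) {u : ℝ} (hu : 0 ≤ u) : 1 + p * u ≤ (1 + u) ^ p := by
  have h := aux_mono (fun v => (1 + v) ^ p - (1 + p * v))
      (fun v => p * ((1 + v) ^ (p - 1) - 1)) ?_ ?_ hu
  · simp only [Real.one_rpow, add_zero, mul_zero] at h
    linarith [h]
  · intro v hv
    have : HasDerivAt (fun v : ℝ => (1 + v) ^ p - (1 + p * v)) (p * (1 + v) ^ (p - 1) - p * 1) v :=
      (hasDerivAt_base p hv).sub (((hasDerivAt_id v).const_mul p).const_add 1)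
    convert this using 1
    ring
  · intro v hv
    show 0 ≤ p * ((1 + v) ^ (p - 1) - 1)
    have hb := bern0 (p := p - 1) (by linarith) hv
    nlinarith [hb]

lemma taylor2_ub {p : ℝ} (hp : p ≤ 0) {u : ℝ} (hu : 0 ≤ u) :
    (1 + u) ^ p ≤ 1 + p * u + p * (p - 1) / 2 * u ^ 2 := by
  have h := aux_mono (fun v => 1 + p * v + p * (p - 1) / 2 * v ^ 2 - (1 + v) ^ p)
      (fun v => p * ((1 + (p - 1) * v) - (1 + v) ^ (p - 1))) ?_ ?_ hu
  · simp only [Real.one_rpow, mul_zero, add_zero] at h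
    norm_num at h
    linarith [h]
  · intro v hv
    have hd : HasDerivAt (fun v : ℝ => 1 + p * v + p * (p - 1) / 2 * v ^ 2 - (1 + v) ^ p)
        (p * 1 + p * (p - 1) / 2 * (↑2 * v ^ 1) - p * (1 + v) ^ (p - 1)) v :=
      ((((hasDerivAt_id v).const_mul p).const_add 1).add
        ((hasDerivAt_pow 2 v).const_mul (p * (p - 1) / 2))).sub (hasDerivAt_base p hv)
    convert hd using 1
    push_cast
    ring
  · intro v hv
    show 0 ≤ p * ((1 + (p - 1) * v) - (1 + v) ^ (p - 1))
    have hb := bern1 (p := p - 1) (by linarith) hv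
    nlinarith [hb]

lemma taylor3_lb_neg {p : ℝ} (hp : p ≤ 0) {u : ℝ} (hu : 0 ≤ u) :
    1 + p * u + p * (p - 1) / 2 * u ^ 2 + p * (p - 1) * (p - 2) / 6 * u ^ 3 ≤ (1 + u) ^ p := by
  have h := aux_mono (fun v => (1 + v) ^ p -
      (1 + p * v + p * (p - 1) / 2 * v ^ 2 + p * (p - 1) * (p - 2) / 6 * v ^ 3))
      (fun v => p * ((1 + v) ^ (p - 1) -
        (1 + (p - 1) * v + (p - 1) * (p - 2) / 2 * v ^ 2))) ?_ ?_ hu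
  · simp only [Real.one_rpow, mul_zero, add_zero] at h
    norm_num at h
    linarith [h]
  · intro v hv
    have hd : HasDerivAt (fun v : ℝ => (1 + v) ^ p -
        (1 + p * v + p * (p - 1) / 2 * v ^ 2 + p * (p - 1) * (p - 2) / 6 * v ^ 3))
        (p * (1 + v) ^ (p - 1) - (p * 1 + p * (p - 1) / 2 * (↑2 * v ^ 1)
          + p * (p - 1) * (p - 2) / 6 * (↑3 * v ^ 2))) v :=
      (hasDerivAt_base p hv).sub (((((hasDerivAt_id v).const_mul p).const_add 1).add
        ((hasDerivAt_pow 2 v).const_mul (p * (p - 1) / 2))).add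
        ((hasDerivAt_pow 3 v).const_mul (p * (p - 1) * (p - 2) / 6)))
    convert hd using 1
    push_cast
    ring
  · intro v hv
    show 0 ≤ p * ((1 + v) ^ (p - 1) - (1 + (p - 1) * v + (p - 1) * (p - 2) / 2 * v ^ 2))
    have hb := taylor2_ub (p := p - 1) (by linarith) hv
    nlinarith [hb]

lemma taylor4_lb {p : ℝ} (hp0 : 0 ≤ p) (hp1 : p ≤ 1) {u : ℝ} (hu : 0 ≤ u) :
    1 + p * u + p * (p - 1) / 2 * u ^ 2 + p * (p - 1) * (p - 2) / 6 * u ^ 3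
      + p * (p - 1) * (p - 2) * (p - 3) / 24 * u ^ 4 ≤ (1 + u) ^ p := by
  have h := aux_mono (fun v => (1 + v) ^ p -
      (1 + p * v + p * (p - 1) / 2 * v ^ 2 + p * (p - 1) * (p - 2) / 6 * v ^ 3
        + p * (p - 1) * (p - 2) * (p - 3) / 24 * v ^ 4))
      (fun v => p * ((1 + v) ^ (p - 1) - (1 + (p - 1) * v + (p - 1) * (p - 2) / 2 * v ^ 2
        + (p - 1) * (p - 2) * (p - 3) / 6 * v ^ 3))) ?_ ?_ hu
  · simp only [Real.one_rpow, mul_zero, add_zero] at h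
    norm_num at h
    linarith [h]
  · intro v hv
    have hd : HasDerivAt (fun v : ℝ => (1 + v) ^ p -
        (1 + p * v + p * (p - 1) / 2 * v ^ 2 + p * (p - 1) * (p - 2) / 6 * v ^ 3
          + p * (p - 1) * (p - 2) * (p - 3) / 24 * v ^ 4))
        (p * (1 + v) ^ (p - 1) - (p * 1 + p * (p - 1) / 2 * (↑2 * v ^ 1)
          + p * (p - 1) * (p - 2) / 6 * (↑3 * v ^ 2)
          + p * (p - 1) * (p - 2) * (p - 3) / 24 * (↑4 * v ^ 3))) v :=
      (hasDerivAt_base p hv).sub ((((((hasDerivAt_id v).const_mul p).const_add 1).add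
        ((hasDerivAt_pow 2 v).const_mul (p * (p - 1) / 2))).add
        ((hasDerivAt_pow 3 v).const_mul (p * (p - 1) * (p - 2) / 6))).add
        ((hasDerivAt_pow 4 v).const_mul (p * (p - 1) * (p - 2) * (p - 3) / 24)))
    convert hd using 1
    push_cast
    ring
  · intro v hv
    show 0 ≤ p * ((1 + v) ^ (p - 1) - (1 + (p - 1) * v + (p - 1) * (p - 2) / 2 * v ^ 2
        + (p - 1) * (p - 2) * (p - 3) / 6 * v ^ 3))
    have hb := taylor3_lb_neg (p := p - 1) (by linarith) hv
    nlinarith [hb]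

lemma taylor2_lb {p : ℝ} (hp0 : 0 ≤ p) (hp1 : p ≤ 1) {u : ℝ} (hu : 0 ≤ u) :
    1 + p * u + p * (p - 1) / 2 * u ^ 2 ≤ (1 + u) ^ p := by
  have h := aux_mono (fun v => (1 + v) ^ p - (1 + p * v + p * (p - 1) / 2 * v ^ 2))
      (fun v => p * ((1 + v) ^ (p - 1) - (1 + (p - 1) * v))) ?_ ?_ hu
  · simp only [Real.one_rpow, mul_zero, add_zero] at h
    norm_num at h
    linarith [h]
  · intro v hv
    have hd : HasDerivAt (fun v : ℝ => (1 + v) ^ p - (1 + p * v + p * (p - 1) / 2 * v ^ 2))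
        (p * (1 + v) ^ (p - 1) - (p * 1 + p * (p - 1) / 2 * (↑2 * v ^ 1))) v :=
      (hasDerivAt_base p hv).sub ((((hasDerivAt_id v).const_mul p).const_add 1).add
        ((hasDerivAt_pow 2 v).const_mul (p * (p - 1) / 2)))
    convert hd using 1
    push_cast
    ring
  · intro v hv
    show 0 ≤ p * ((1 + v) ^ (p - 1) - (1 + (p - 1) * v))
    have hb := bern1 (p := p - 1) (by linarith) hv
    nlinarith [hb]

lemma taylor3_lb {p : ℝ} (hp1 : 1 ≤ p) (hp2 : p ≤ 2) {u : ℝ} (hu : 0 ≤ u) :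
    1 + p * u + p * (p - 1) / 2 * u ^ 2 + p * (p - 1) * (p - 2) / 6 * u ^ 3 ≤ (1 + u) ^ p := by
  have h := aux_mono (fun v => (1 + v) ^ p -
      (1 + p * v + p * (p - 1) / 2 * v ^ 2 + p * (p - 1) * (p - 2) / 6 * v ^ 3))
      (fun v => p * ((1 + v) ^ (p - 1) -
        (1 + (p - 1) * v + (p - 1) * (p - 2) / 2 * v ^ 2))) ?_ ?_ hu
  · simp only [Real.one_rpow, mul_zero, add_zero] at h
    norm_num at h
    linarith [h]
  · intro v hv
    have hd : HasDerivAt (fun v : ℝ => (1 + v) ^ p -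
        (1 + p * v + p * (p - 1) / 2 * v ^ 2 + p * (p - 1) * (p - 2) / 6 * v ^ 3))
        (p * (1 + v) ^ (p - 1) - (p * 1 + p * (p - 1) / 2 * (↑2 * v ^ 1)
          + p * (p - 1) * (p - 2) / 6 * (↑3 * v ^ 2))) v :=
      (hasDerivAt_base p hv).sub (((((hasDerivAt_id v).const_mul p).const_add 1).add
        ((hasDerivAt_pow 2 v).const_mul (p * (p - 1) / 2))).add
        ((hasDerivAt_pow 3 v).const_mul (p * (p - 1) * (p - 2) / 6)))
    convert hd using 1
    push_cast
    ring
  · intro v hv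
    show 0 ≤ p * ((1 + v) ^ (p - 1) - (1 + (p - 1) * v + (p - 1) * (p - 2) / 2 * v ^ 2))
    have hb := taylor2_lb (p := p - 1) (by linarith) (by linarith) hv
    nlinarith [hb]

lemma coef1_nonneg {b : ℝ} (hb : 4 ≤ b) :
    0 ≤ (b^2-4)*(3*b-8)/(12*b^3)*((b+2)/(12*(b+4)))^3 := by
  have hb0 : (0:ℝ) < b := by linarith
  have h1 : (0:ℝ) ≤ (b^2-4)*(3*b-8) := by nlinarith
  exact mul_nonneg (div_nonneg h1 (by positivity)) (by positivity)

lemma coef3_nonneg {b : ℝ} (hb : 4 ≤ b) :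
    0 ≤ 4*(b-4)*(b-2)*(3*b-4)/(3*b^4)*((b+2)/(12*(b+4)))^5 := by
  have hb0 : (0:ℝ) < b := by linarith
  have h1 : (0:ℝ) ≤ 4*(b-4)*(b-2)*(3*b-4) := by
    nlinarith [mul_nonneg (mul_nonneg (by linarith : (0:ℝ) ≤ b-4)
      (by linarith : (0:ℝ) ≤ b-2)) (by linarith : (0:ℝ) ≤ 3*b-4)]
  exact mul_nonneg (div_nonneg h1 (by positivity)) (by positivity)

lemma coef_id {b : ℝ} (hb : 4 ≤ b) :
    (b^2-4)*(3*b-8)/(12*b^3)*((b+2)/(12*(b+4)))^3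
      + 3*(-((b-4)*(b-2)*(b+4)/b^3)*((b+2)/(12*(b+4)))^4
        - (b+2)*(b-2)/(9*b^3)*((b+2)/(12*(b+4)))^3) = 0 := by
  have hb0 : (0:ℝ) < b := by linarith
  have hb4 : (0:ℝ) < b + 4 := by linarith
  field_simp
  ring

lemma quad_nonneg {P1 P2 P3 X : ℝ} (h1 : 0 ≤ P1) (h3 : 0 ≤ P3)
    (hid : P1 + 3 * P2 = 0) (hX13 : 1/3 ≤ X) (hX0 : 0 < X) :
    0 ≤ P1 * X^2 + P2 * X + P3 := by
  nlinarith [mul_nonneg (mul_nonneg h1 hX0.le) (by linarith : (0:ℝ) ≤ X - 1/3)]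

set_option maxHeartbeats 2000000 in
theorem stmt_12 (b A τ : ℝ) (hb : 4 ≤ b) (hA : 0 < A)
    (hbA : 1 ≤ (b + 1) * (b * A))
    (hτ : τ = (b * A) ^ ((1 : ℝ) / b)
        * (1 + ((b + 2) / (12 * (b + 4))) * (b * A) ^ (-(2 : ℝ) / b)) ^ ((1 : ℝ) / b)) :
    b * (b * A) ^ (1 + (4 : ℝ) / b) + (1 / 3) * (b * A) ^ (1 + (2 : ℝ) / b)
      + ((b + 2) ^ (2 : ℕ) / (72 * b * (b + 4))) * (b * A)
      + ((13 * b ^ (3 : ℕ) + 56 * b ^ (2 : ℕ) - 52 * b - 32) / (12 * b ^ (3 : ℕ)))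
          * ((b + 2) / (12 * (b + 4))) ^ (3 : ℕ) * (b * A) ^ (1 - (2 : ℝ) / b)
    ≤ (b + 4) * τ ^ (4 : ℕ) * (b * A) - 4 * τ ^ (b + 4) + (1 / 3) * τ ^ (b + 2) := by
  have hb0 : (0:ℝ) < b := by linarith
  set x : ℝ := b * A with hxdef
  have hx : 0 < x := mul_pos hb0 hA
  set c : ℝ := (b + 2) / (12 * (b + 4)) with hc
  have hc0 : 0 < c := div_pos (by linarith) (by linarith)
  set X : ℝ := x ^ ((2:ℝ)/b) with hX
  have hX0 : 0 < X := by rw [hX]; exact Real.rpow_pos_of_pos hx _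
  have hinv : x ^ (-(2:ℝ)/b) = X⁻¹ := by
    rw [hX, neg_div, Real.rpow_neg hx.le]
  rw [hinv] at hτ
  set t : ℝ := c * X⁻¹ with ht
  have ht0 : 0 < t := mul_pos hc0 (inv_pos.2 hX0)
  have h1t : (0:ℝ) < 1 + t := by linarith
  -- lower bound on X
  have hxlb : 1 / (b + 1) ≤ x := by
    rw [div_le_iff₀ (by linarith)]
    linarith [hbA, mul_comm x (b+1)]
  have hexp_sq : ∀ s : ℝ, 0 ≤ s → (1 + s/2)^(2:ℕ) ≤ Real.exp s := by
    intro s hs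
    have h := Real.add_one_le_exp (s/2)
    have h2 : Real.exp (s/2) * Real.exp (s/2) = Real.exp s := by
      rw [← Real.exp_add]; ring_nf
    nlinarith [Real.exp_pos (s/2)]
  have hlog3 : (1:ℝ) ≤ Real.log 3 := by
    rw [Real.le_log_iff_exp_le (by norm_num : (0:ℝ) < 3)]
    exact le_of_lt (lt_of_lt_of_le Real.exp_one_lt_d9 (by norm_num))
  have hb1 : (b+1) ^ ((2:ℝ)) ≤ (3:ℝ) ^ b := by
    have h34 : (3:ℝ) ^ b = 81 * Real.exp ((b-4) * Real.log 3) := by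
      have hsplit : (3:ℝ) ^ b = (3:ℝ) ^ (4:ℝ) * (3:ℝ) ^ (b - 4) := by
        rw [← Real.rpow_add (by norm_num : (0:ℝ) < 3)]
        norm_num
      have h81 : (3:ℝ) ^ (4:ℝ) = 81 := by
        rw [show (4:ℝ) = ((4:ℕ):ℝ) by norm_num, Real.rpow_natCast]; norm_num
      rw [hsplit, h81, Real.rpow_def_of_pos (by norm_num : (0:ℝ) < 3), mul_comm (Real.log 3)]
    have hmono : Real.exp (b - 4) ≤ Real.exp ((b-4) * Real.log 3) :=
      Real.exp_le_exp.2 (by nlinarith [hlog3])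
    have hq := hexp_sq (b - 4) (by linarith)
    have h2 : (b+1) ^ ((2:ℝ)) = (b+1) ^ (2:ℕ) := by
      rw [show (2:ℝ) = ((2:ℕ):ℝ) by norm_num, Real.rpow_natCast]
    rw [h34, h2]
    nlinarith [hq, hmono]
  have h3 : (b+1) ^ ((2:ℝ)/b) ≤ 3 := by
    have hstep := Real.rpow_le_rpow (by positivity) hb1 (by positivity : (0:ℝ) ≤ 1/b)
    rw [← Real.rpow_mul (by linarith : (0:ℝ) ≤ b+1), ← Real.rpow_mul (by norm_num : (0:ℝ) ≤ 3)]
      at hstep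
    rw [show b * (1/b) = 1 by field_simp, Real.rpow_one] at hstep
    rw [show (2:ℝ) * (1/b) = 2/b by ring] at hstep
    exact hstep
  have hX13 : 1/3 ≤ X := by
    have hs1 : (1/(b+1)) ^ ((2:ℝ)/b) ≤ X := by
      rw [hX]
      exact Real.rpow_le_rpow (by positivity) hxlb (by positivity)
    have hs2 : (1/(b+1)) ^ ((2:ℝ)/b) = ((b+1) ^ ((2:ℝ)/b))⁻¹ := by
      rw [one_div, Real.inv_rpow (by linarith : (0:ℝ) ≤ b+1)]
    have hs3 : (3:ℝ)⁻¹ ≤ ((b+1) ^ ((2:ℝ)/b))⁻¹ :=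
      inv_anti₀ (Real.rpow_pos_of_pos (by linarith) _) h3
    calc (1:ℝ)/3 = (3:ℝ)⁻¹ := by norm_num
      _ ≤ ((b+1) ^ ((2:ℝ)/b))⁻¹ := hs3
      _ = (1/(b+1)) ^ ((2:ℝ)/b) := hs2.symm
      _ ≤ X := hs1
  have hXi3 : X⁻¹ ≤ 3 := by
    have h := inv_anti₀ (by norm_num : (0:ℝ) < 1/3) hX13
    norm_num at h
    exact h
  have ht3c : t ≤ 3 * c := by
    rw [ht]
    calc c * X⁻¹ ≤ c * 3 := mul_le_mul_of_nonneg_left hXi3 hc0.le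
      _ = 3 * c := by ring
  have hc112 : c ≤ 1/12 := by
    rw [hc, div_le_iff₀ (by linarith : (0:ℝ) < 12*(b+4))]
    nlinarith
  have hb4t : 0 ≤ b - 4 * t := by linarith [ht3c, hc112]
  -- power rewrites
  have hx4 : x ^ ((4:ℝ)/b) = X ^ (2:ℕ) := by
    rw [hX, ← Real.rpow_natCast (x ^ ((2:ℝ)/b)) 2, ← Real.rpow_mul hx.le,
      show (2:ℝ)/b * ((2:ℕ):ℝ) = (4:ℝ)/b by push_cast; ring]
  have hτpow : ∀ r : ℝ, τ ^ r = x ^ (r/b) * (1+t) ^ (r/b) := by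
    intro r
    rw [hτ, Real.mul_rpow (Real.rpow_nonneg hx.le _) (Real.rpow_nonneg h1t.le _),
      ← Real.rpow_mul hx.le, ← Real.rpow_mul h1t.le,
      show (1:ℝ)/b * r = r/b by ring]
  have h4' : τ ^ (4:ℕ) = X ^ (2:ℕ) * (1+t) ^ ((4:ℝ)/b) := by
    rw [← Real.rpow_natCast τ 4, show ((4:ℕ):ℝ) = (4:ℝ) by norm_num, hτpow 4, hx4]
  have hbp4 : τ ^ (b+4) = x * (X ^ (2:ℕ) * ((1+t) * (1+t) ^ ((4:ℝ)/b))) := by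
    rw [hτpow (b+4), show (b+4)/b = 1 + (4:ℝ)/b by field_simp,
      Real.rpow_add hx, Real.rpow_add h1t, Real.rpow_one, Real.rpow_one, hx4]
    ring
  have hbp2 : τ ^ (b+2) = x * (X * ((1+t) * (1+t) ^ ((2:ℝ)/b))) := by
    rw [hτpow (b+2), show (b+2)/b = 1 + (2:ℝ)/b by field_simp,
      Real.rpow_add hx, Real.rpow_add h1t, Real.rpow_one, Real.rpow_one, ← hX]
    ring
  have e1 : x ^ (1 + (4:ℝ)/b) = x * X ^ (2:ℕ) := by
    rw [Real.rpow_add hx, Real.rpow_one, hx4]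
  have e2 : x ^ (1 + (2:ℝ)/b) = x * X := by
    rw [Real.rpow_add hx, Real.rpow_one, ← hX]
  have e3 : x ^ (1 - (2:ℝ)/b) = x * X⁻¹ := by
    rw [show 1 - (2:ℝ)/b = 1 + (-(2:ℝ)/b) by ring, Real.rpow_add hx, Real.rpow_one, hinv]
  -- Taylor bounds
  have hp4a : (0:ℝ) ≤ 4/b := by positivity
  have hp4b : (4:ℝ)/b ≤ 1 := by rw [div_le_one hb0]; linarith
  have hQ4 := taylor4_lb (p := (4:ℝ)/b) hp4a hp4b ht0.le
  have hq2a : (1:ℝ) ≤ 1 + (2:ℝ)/b := by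
    have : (0:ℝ) ≤ 2/b := by positivity
    linarith
  have hq2b : 1 + (2:ℝ)/b ≤ 2 := by
    have : (2:ℝ)/b ≤ 1 := by rw [div_le_one hb0]; linarith
    linarith
  have hQ2 := taylor3_lb (p := 1 + (2:ℝ)/b) hq2a hq2b ht0.le
  have hsplit2 : (1+t) ^ (1 + (2:ℝ)/b) = (1+t) * (1+t) ^ ((2:ℝ)/b) := by
    rw [Real.rpow_add h1t, Real.rpow_one]
  rw [hsplit2] at hQ2
  -- abbreviations for the polynomials
  set p4 : ℝ := (4:ℝ)/b with hp4
  set p2 : ℝ := 1 + (2:ℝ)/b with hp2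
  set Q4 : ℝ := 1 + p4 * t + p4 * (p4 - 1) / 2 * t ^ 2 + p4 * (p4 - 1) * (p4 - 2) / 6 * t ^ 3
      + p4 * (p4 - 1) * (p4 - 2) * (p4 - 3) / 24 * t ^ 4 with hQ4def
  set Q2 : ℝ := 1 + p2 * t + p2 * (p2 - 1) / 2 * t ^ 2 + p2 * (p2 - 1) * (p2 - 2) / 6 * t ^ 3
      with hQ2def
  -- core polynomial inequality
  have core : b * (x * X ^ (2:ℕ)) + 1/3 * (x * X) + ((b+2) ^ (2:ℕ) / (72*b*(b+4))) * x
      + ((13*b ^ (3:ℕ) + 56*b ^ (2:ℕ) - 52*b - 32) / (12*b ^ (3:ℕ))) * c ^ (3:ℕ) * (x * X⁻¹)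
      ≤ x * X ^ (2:ℕ) * (b - 4*t) * Q4 + 1/3 * (x * X) * Q2 := by
    have hP1 : (0:ℝ) ≤ (b^2-4)*(3*b-8)/(12*b^3)*c^3 := by
      rw [hc]; exact coef1_nonneg hb
    have hP3 : (0:ℝ) ≤ 4*(b-4)*(b-2)*(3*b-4)/(3*b^4)*c^5 := by
      rw [hc]; exact coef3_nonneg hb
    have hP2id : (b^2-4)*(3*b-8)/(12*b^3)*c^3
        + 3*(-((b-4)*(b-2)*(b+4)/b^3)*c^4 - (b+2)*(b-2)/(9*b^3)*c^3) = 0 := by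
      rw [hc]; exact coef_id hb
    have hB : 0 ≤ (b^2-4)*(3*b-8)/(12*b^3)*c^3 * X^2
        + (-((b-4)*(b-2)*(b+4)/b^3)*c^4 - (b+2)*(b-2)/(9*b^3)*c^3) * X
        + 4*(b-4)*(b-2)*(3*b-4)/(3*b^4)*c^5 :=
      quad_nonneg hP1 hP3 hP2id hX13 hX0
    rw [← sub_nonneg]
    have hiden : x * X ^ (2:ℕ) * (b - 4*t) * Q4 + 1/3 * (x * X) * Q2
        - (b * (x * X ^ (2:ℕ)) + 1/3 * (x * X) + ((b+2) ^ (2:ℕ) / (72*b*(b+4))) * x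
          + ((13*b ^ (3:ℕ) + 56*b ^ (2:ℕ) - 52*b - 32) / (12*b ^ (3:ℕ))) * c ^ (3:ℕ)
            * (x * X⁻¹))
        = x * ((b^2-4)*(3*b-8)/(12*b^3)*c^3 * X^2
            + (-((b-4)*(b-2)*(b+4)/b^3)*c^4 - (b+2)*(b-2)/(9*b^3)*c^3) * X
            + 4*(b-4)*(b-2)*(3*b-4)/(3*b^4)*c^5) / X^3 := by
      rw [hQ4def, hQ2def, ht, hp4, hp2, hc]
      field_simp
      ring
    rw [hiden]
    exact div_nonneg (mul_nonneg hx.le hB) (by positivity)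
  -- monotone step
  have m1 : x * X ^ (2:ℕ) * (b - 4*t) * Q4 ≤ x * X ^ (2:ℕ) * (b - 4*t) * ((1+t) ^ ((4:ℝ)/b)) :=
    mul_le_mul_of_nonneg_left hQ4
      (mul_nonneg (mul_nonneg hx.le (pow_nonneg hX0.le 2)) hb4t)
  have m2 : 1/3 * (x * X) * Q2 ≤ 1/3 * (x * X) * ((1+t) * (1+t) ^ ((2:ℝ)/b)) :=
    mul_le_mul_of_nonneg_left hQ2
      (mul_nonneg (by norm_num : (0:ℝ) ≤ 1/3) (mul_nonneg hx.le hX0.le))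
  rw [h4', hbp4, hbp2, e1, e2, e3]
  refine le_trans core ?_
  calc x * X ^ (2:ℕ) * (b - 4*t) * Q4 + 1/3 * (x * X) * Q2
      ≤ x * X ^ (2:ℕ) * (b - 4*t) * ((1+t) ^ ((4:ℝ)/b))
        + 1/3 * (x * X) * ((1+t) * (1+t) ^ ((2:ℝ)/b)) := add_le_add m1 m2
    _ = (b + 4) * (X ^ (2:ℕ) * (1+t) ^ ((4:ℝ)/b)) * x
        - 4 * (x * (X ^ (2:ℕ) * ((1+t) * (1+t) ^ ((4:ℝ)/b))))
        + 1 / 3 * (x * (X * ((1+t) * (1+t) ^ ((2:ℝ)/b)))) := by ring
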